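/- arXiv:2305.09995 — 4 statements merged into one kernel-verified Lean document; each statement's English description precedes it below -/
import Mathlib

section
/- Let P and Q be two probability distributions on the same finite space Ω with Q absolutely continuous with respect to P, and let A ⊆ Ω be any event. Then d_TV(P,Q) ≤ 2(P(A)+Q(A)) + (1−Q(A))·d_TV(P|_{A^c}, Q|_{A^c}), where P|_{A^c} and Q|_{A^c} denote the conditional distributions given the complement of A. -/
open Finset

/-- Total variation distance between two p.m.f.s on a finite space. -/
noncomputable def tvDist {Ω : Type*} [Fintype Ω] (P Q : Ω → ℝ) : ℝ :=
  (∑ x, |P x - Q x|) / 2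

/-- The conditional distribution of `P` given the event `E`. -/
noncomputable def condDist {Ω : Type*} [Fintype Ω] [DecidableEq Ω]
    (P : Ω → ℝ) (E : Finset Ω) : Ω → ℝ :=
  fun x => if x ∈ E then P x / ∑ y ∈ E, P y else 0

/-- For probability distributions `P`, `Q` on a finite space with `Q ≪ P` and any event `A`,
`d_TV(P,Q) ≤ 2(P(A)+Q(A)) + (1 − Q(A)) · d_TV(P|_{Aᶜ}, Q|_{Aᶜ})`. -/
theorem stmt0 {Ω : Type*} [Fintype Ω] [DecidableEq Ω] (P Q : Ω → ℝ) (A : Finset Ω)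
    (hP0 : ∀ x, 0 ≤ P x) (hP1 : ∑ x, P x = 1)
    (hQ0 : ∀ x, 0 ≤ Q x) (hQ1 : ∑ x, Q x = 1)
    (hac : ∀ x, P x = 0 → Q x = 0) :
    tvDist P Q ≤ 2 * ((∑ x ∈ A, P x) + (∑ x ∈ A, Q x)) +
      (1 - ∑ x ∈ A, Q x) * tvDist (condDist P Aᶜ) (condDist Q Aᶜ) := by
  have habs : ∀ x, |P x - Q x| ≤ P x + Q x := fun x => by
    rw [abs_sub_le_iff]; constructor <;> nlinarith [hP0 x, hQ0 x]
  set p := ∑ x ∈ Aᶜ, P x with hp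
  set q := ∑ x ∈ Aᶜ, Q x with hq
  have hp0 : 0 ≤ p := Finset.sum_nonneg fun x _ => hP0 x
  have hq0 : 0 ≤ q := Finset.sum_nonneg fun x _ => hQ0 x
  have hpA0 : 0 ≤ ∑ x ∈ A, P x := Finset.sum_nonneg fun x _ => hP0 x
  have hqA0 : 0 ≤ ∑ x ∈ A, Q x := Finset.sum_nonneg fun x _ => hQ0 x
  have habsA : ∑ x ∈ A, |P x - Q x| ≤ (∑ x ∈ A, P x) + (∑ x ∈ A, Q x) := by
    rw [← Finset.sum_add_distrib]
    exact Finset.sum_le_sum fun x _ => habs x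
  have hpsum : (∑ x ∈ A, P x) + p = 1 := by rw [hp, Finset.sum_add_sum_compl, hP1]
  have hqsum : (∑ x ∈ A, Q x) + q = 1 := by rw [hq, Finset.sum_add_sum_compl, hQ1]
  have htv0 : 0 ≤ tvDist (condDist P Aᶜ) (condDist Q Aᶜ) := by
    unfold tvDist
    positivity
  have hsplit : ∑ x, |P x - Q x| = (∑ x ∈ A, |P x - Q x|) + ∑ x ∈ Aᶜ, |P x - Q x| :=
    (Finset.sum_add_sum_compl A _).symm
  by_cases hq' : q = 0
  · -- Then ∑_A Q = 1 and tvDist P Q ≤ 1 ≤ RHS.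
    have h1 : tvDist P Q ≤ 1 := by
      have hb : ∑ x, |P x - Q x| ≤ ∑ x, (P x + Q x) :=
        Finset.sum_le_sum fun x _ => habs x
      rw [Finset.sum_add_distrib, hP1, hQ1] at hb
      unfold tvDist
      linarith
    have h2 : (1 : ℝ) - ∑ x ∈ A, Q x = q := by linarith
    rw [h2, hq']
    nlinarith
  · have hqpos : 0 < q := lt_of_le_of_ne hq0 (Ne.symm hq')
    have hppos : 0 < p := by
      rcases lt_or_eq_of_le hp0 with h | h
      · exact h
      · exfalso
        have hPz : ∀ x ∈ Aᶜ, P x = 0 := by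
          intro x hx
          have := (Finset.sum_eq_zero_iff_of_nonneg (fun y _ => hP0 y)).mp h.symm
          exact this x hx
        have : q = 0 := Finset.sum_eq_zero fun x hx => hac x (hPz x hx)
        exact hq' this
    -- key bound on Aᶜ
    have hkey : ∑ x ∈ Aᶜ, |P x - Q x| ≤
        |p - q| + q * ∑ x ∈ Aᶜ, |condDist P Aᶜ x - condDist Q Aᶜ x| := by
      have hterm : ∀ x ∈ Aᶜ, |P x - Q x| ≤
          P x * |1 - q / p| + q * |condDist P Aᶜ x - condDist Q Aᶜ x| := by
        intro x hx
        have hc1 : condDist P Aᶜ x = P x / p := by simp [condDist, hx, hp]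
        have hc2 : condDist Q Aᶜ x = Q x / q := by simp [condDist, hx, hq]
        rw [hc1, hc2]
        have t1 : |P x - Q x| ≤ |P x - q * (P x / p)| + |q * (P x / p) - Q x| := by
          have := abs_sub_abs_le_abs_sub (P x - Q x) 0
          calc |P x - Q x| = |(P x - q * (P x / p)) + (q * (P x / p) - Q x)| := by ring_nf
            _ ≤ _ := abs_add_le _ _
        have e1 : |P x - q * (P x / p)| = P x * |1 - q / p| := by
          have hr : P x - q * (P x / p) = P x * (1 - q / p) := by field_simp
          rw [hr, abs_mul, abs_of_nonneg (hP0 x)]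
        have e2 : |q * (P x / p) - Q x| = q * |P x / p - Q x / q| := by
          have hr : q * (P x / p) - Q x = q * (P x / p - Q x / q) := by field_simp
          rw [hr, abs_mul, abs_of_nonneg hq0]
        rw [e1, e2] at t1
        exact t1
      calc ∑ x ∈ Aᶜ, |P x - Q x|
          ≤ ∑ x ∈ Aᶜ, (P x * |1 - q / p| + q * |condDist P Aᶜ x - condDist Q Aᶜ x|) :=
            Finset.sum_le_sum hterm
        _ = (∑ x ∈ Aᶜ, P x) * |1 - q / p|
            + q * ∑ x ∈ Aᶜ, |condDist P Aᶜ x - condDist Q Aᶜ x| := by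
            rw [Finset.sum_add_distrib, ← Finset.sum_mul, ← Finset.mul_sum]
        _ = |p - q| + q * ∑ x ∈ Aᶜ, |condDist P Aᶜ x - condDist Q Aᶜ x| := by
            congr 1
            have h := abs_mul p (1 - q / p)
            rw [abs_of_pos hppos] at h
            rw [← hp, ← h]
            congr 1
            field_simp
    -- conditional tv sum equals sum over Aᶜ
    have hcsum : ∑ x, |condDist P Aᶜ x - condDist Q Aᶜ x|
        = ∑ x ∈ Aᶜ, |condDist P Aᶜ x - condDist Q Aᶜ x| := by
      refine (Finset.sum_subset (Finset.subset_univ _) ?_).symm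
      intro x _ hx
      simp [condDist, hx]
    have hpq : |p - q| ≤ (∑ x ∈ A, P x) + (∑ x ∈ A, Q x) := by
      rw [abs_le]; constructor <;> linarith
    have h2 : (1 : ℝ) - ∑ x ∈ A, Q x = q := by linarith
    rw [h2]
    unfold tvDist
    rw [hsplit, hcsum]
    nlinarith [hkey, habsA, hpq]
end

section
/- Let P be a probability distribution on a finite space with p.m.f. P(x) = f(x)/Z for a positive function f and normalizer Z = Σ_x f(x). Let U be a discrete random variable and for each value u let Q_u(x) = f_u(x)/Z_u be a Gibbs distribution with normalizer Z_u = Σ_x f_u(x), and let Q(x) = E_U[f_U(x)/Z_U] be the mixture. Define ρ_u(x) = f_u(x)/f(x). Then χ²(Q‖P) + 1 = E_{U,U'}[ E_{X∼P}[ρ_U(X) ρ_{U'}(X)] / ( E_{X∼P}[ρ_U(X)] · E_{X∼P}[ρ_{U'}(X)] ) ], where U' is an i.i.d. copy of U. -/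
open Finset

/-- χ²-divergence identity for a mixture of Gibbs measures: with `P(x) = f(x)/Z`,
`Q(x) = E_U[f_U(x)/Z_U]` and `ρ_u(x) = f_u(x)/f(x)`,
`χ²(Q‖P) + 1 = E_{U,U'}[ E_P[ρ_U ρ_{U'}] / (E_P[ρ_U] E_P[ρ_{U'}]) ]`.
Here `χ²(Q‖P) + 1 = E_{X∼P}[(dQ/dP(X))²]`. -/
theorem stmt5 {Ω U : Type*} [Fintype Ω] [Fintype U]
    (f : Ω → ℝ) (fU : U → Ω → ℝ) (π : U → ℝ)
    (hf : ∀ x, 0 < f x) (hfU : ∀ u x, 0 < fU u x)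
    (hπ0 : ∀ u, 0 ≤ π u) (hπ1 : ∑ u, π u = 1) :
    (∑ x, (f x / ∑ y, f y) *
        ((∑ u, π u * (fU u x / ∑ y, fU u y)) / (f x / ∑ y, f y)) ^ 2) =
      ∑ u, ∑ u', π u * π u' *
        ((∑ x, (f x / ∑ y, f y) * ((fU u x / f x) * (fU u' x / f x))) /
          ((∑ x, (f x / ∑ y, f y) * (fU u x / f x)) *
            (∑ x, (f x / ∑ y, f y) * (fU u' x / f x)))) := by
  by_cases hne : Nonempty Ω
  · have hZ : (0:ℝ) < ∑ y, f y :=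
      Finset.sum_pos (fun y _ => hf y) Finset.univ_nonempty
    have hZU : ∀ u, (0:ℝ) < ∑ y, fU u y := fun u =>
      Finset.sum_pos (fun y _ => hfU u y) Finset.univ_nonempty
    set Z : ℝ := ∑ y, f y with hZdef
    have hZ' : Z ≠ 0 := ne_of_gt hZ
    -- simplify the marginal sums on the RHS
    have hmarg : ∀ u, (∑ x, (f x / Z) * (fU u x / f x)) = (∑ y, fU u y) / Z := by
      intro u
      rw [Finset.sum_div]
      refine Finset.sum_congr rfl fun x _ => ?_
      have hfx : f x ≠ 0 := ne_of_gt (hf x)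
      field_simp
    -- LHS inner expansion
    have hLHS : (∑ x, (f x / Z) *
        ((∑ u, π u * (fU u x / ∑ y, fU u y)) / (f x / Z)) ^ 2)
        = ∑ u, ∑ u', (Z * π u * π u' / ((∑ y, fU u y) * (∑ y, fU u' y))) *
            (∑ x, fU u x * fU u' x / f x) := by
      have step1 : ∀ x, (f x / Z) *
          ((∑ u, π u * (fU u x / ∑ y, fU u y)) / (f x / Z)) ^ 2
          = ∑ u, ∑ u', (Z * π u * π u' / ((∑ y, fU u y) * (∑ y, fU u' y))) *
              (fU u x * fU u' x / f x) := by
        intro x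
        have hfx : f x ≠ 0 := ne_of_gt (hf x)
        have : (f x / Z) * ((∑ u, π u * (fU u x / ∑ y, fU u y)) / (f x / Z)) ^ 2
            = (Z / f x) * (∑ u, π u * (fU u x / ∑ y, fU u y)) ^ 2 := by
          field_simp
        rw [this, sq, Finset.sum_mul_sum, Finset.mul_sum]
        refine Finset.sum_congr rfl fun u _ => ?_
        rw [Finset.mul_sum]
        refine Finset.sum_congr rfl fun u' _ => ?_
        have hu : (∑ y, fU u y) ≠ 0 := ne_of_gt (hZU u)
        have hu' : (∑ y, fU u' y) ≠ 0 := ne_of_gt (hZU u')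
        field_simp
      rw [Finset.sum_congr rfl fun x _ => step1 x]
      rw [Finset.sum_comm]
      refine Finset.sum_congr rfl fun u _ => ?_
      rw [Finset.sum_comm]
      refine Finset.sum_congr rfl fun u' _ => ?_
      rw [← Finset.mul_sum]
    rw [hLHS]
    refine Finset.sum_congr rfl fun u _ => ?_
    refine Finset.sum_congr rfl fun u' _ => ?_
    rw [hmarg u, hmarg u']
    have hnum : (∑ x, (f x / Z) * ((fU u x / f x) * (fU u' x / f x)))
        = (∑ x, fU u x * fU u' x / f x) / Z := by
      rw [Finset.sum_div]
      refine Finset.sum_congr rfl fun x _ => ?_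
      have hfx : f x ≠ 0 := ne_of_gt (hf x)
      field_simp
    rw [hnum]
    have hu : (∑ y, fU u y) ≠ 0 := ne_of_gt (hZU u)
    have hu' : (∑ y, fU u' y) ≠ 0 := ne_of_gt (hZU u')
    field_simp
  · have : IsEmpty Ω := not_nonempty_iff.mp hne
    simp
end

section
/- Let G be a graph on n vertices such that every pair of vertices has at least c(n−2) common neighbors, for a constant 0 < c < 1. Let u, v be vertices with (u,v) ∉ G. Then for all sufficiently large n there exists, for each vertex w ∉ {u,v}, a subset B(u,w) of the common neighborhood of u and w such that: (1) |B(u,w)| = cn/3 for every w ∉ {u,v}; and (2) for every pair of distinct w₁, w₂ ∉ {u,v}, either w₁ ∉ B(u,w₂) or w₂ ∉ B(u,w₁). -/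
open Finset

/-- The wedge set of `u,w` in the graph `Gr` (given as a set of 2-element edge sets):
vertices adjacent to both `u` and `w`. -/
def wedge {n : ℕ} (Gr : Finset (Finset (Fin n))) (u w : Fin n) : Finset (Fin n) :=
  Finset.univ.filter (fun k => k ≠ u ∧ k ≠ w ∧
    ({u, k} : Finset (Fin n)) ∈ Gr ∧ ({w, k} : Finset (Fin n)) ∈ Gr)

variable {V : Type*} [DecidableEq V]

def inD (D : Multiset (V × V)) (x : V) : ℕ := (D.filter (fun p => p.2 = x)).card
def outD (D : Multiset (V × V)) (x : V) : ℕ := (D.filter (fun p => p.1 = x)).card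

lemma inD_cons (a b : V) (D : Multiset (V × V)) (x : V) :
    inD ((a, b) ::ₘ D) x = inD D x + if b = x then 1 else 0 := by
  simp only [inD, Multiset.filter_cons]
  split_ifs <;> simp_all

lemma outD_cons (a b : V) (D : Multiset (V × V)) (x : V) :
    outD ((a, b) ::ₘ D) x = outD D x + if a = x then 1 else 0 := by
  simp only [outD, Multiset.filter_cons]
  split_ifs <;> simp_all

lemma orient (M : Multiset (Sym2 V)) : ∃ D : Multiset (V × V),
    D.map (Function.uncurry Sym2.mk) = M ∧ ∀ x, inD D x ≤ outD D x + 1 := by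
  suffices H : ∀ N : ℕ, ∀ M : Multiset (Sym2 V), Multiset.card M = N →
      ∃ D : Multiset (V × V), D.map (Function.uncurry Sym2.mk) = M ∧ ∀ x, inD D x ≤ outD D x + 1 from
    H _ M rfl
  intro N
  induction N using Nat.strong_induction_on with
  | _ N IH =>
    intro M hM
    by_cases hA : ∃ x : V, 2 ≤ Multiset.card (M.filter (fun z => x ∈ z))
    · obtain ⟨x, hx⟩ := hA
      have hpos : 0 < Multiset.card (M.filter (fun z => x ∈ z)) := by omega
      obtain ⟨e, he⟩ := Multiset.card_pos_iff_exists_mem.mp hpos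
      have heM : e ∈ M := (Multiset.mem_filter.mp he).1
      have hex : x ∈ e := (Multiset.mem_filter.mp he).2
      have hfe : Multiset.filter (fun z => x ∈ z) (M.erase e)
          = (M.filter (fun z => x ∈ z)).erase e := by
        rw [← Multiset.sub_singleton, Multiset.filter_sub, Multiset.filter_singleton,
          if_pos hex, Multiset.sub_singleton]
      have hpos2 : 0 < Multiset.card (Multiset.filter (fun z => x ∈ z) (M.erase e)) := by
        rw [hfe, Multiset.card_erase_of_mem he, Nat.pred_eq_sub_one]
        omega
      obtain ⟨f, hf⟩ := Multiset.card_pos_iff_exists_mem.mp hpos2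
      have hfM : f ∈ M.erase e := (Multiset.mem_filter.mp hf).1
      have hfx : x ∈ f := (Multiset.mem_filter.mp hf).2
      obtain ⟨a, ha⟩ := Sym2.mem_iff_exists.mp hex
      obtain ⟨c, hcc⟩ := Sym2.mem_iff_exists.mp hfx
      set M₂ := (M.erase e).erase f with hM₂
      have hMe : M = s(x, a) ::ₘ s(x, c) ::ₘ M₂ := by
        rw [hM₂, ← hcc, Multiset.cons_erase hfM, ← ha, Multiset.cons_erase heM]
      have hcard : Multiset.card (s(a, c) ::ₘ M₂) < N := by
        have h2 := congrArg Multiset.card hMe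
        simp only [Multiset.card_cons] at h2 ⊢
        omega
      obtain ⟨D'', hmap, hbal⟩ := IH _ hcard _ rfl
      have hsac : s(a, c) ∈ Multiset.map (Function.uncurry Sym2.mk) D'' := by
        rw [hmap]; exact Multiset.mem_cons_self _ _
      obtain ⟨g, hgD, hg⟩ := Multiset.mem_map.mp hsac
      have hmem : (a, c) ∈ D'' ∨ (c, a) ∈ D'' := by
        obtain ⟨g1, g2⟩ := g
        rcases Sym2.eq_iff.mp hg with ⟨h1, h2⟩ | ⟨h1, h2⟩
        · left; rw [← h1, ← h2]; exact hgD
        · right; rw [← h1, ← h2]; exact hgD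
      rcases hmem with hmem | hmem
      · refine ⟨(a, x) ::ₘ (x, c) ::ₘ (D''.erase (a, c)), ?_, ?_⟩
        · have hD'' : D'' = (a, c) ::ₘ D''.erase (a, c) := (Multiset.cons_erase hmem).symm
          have hmapE₀ : Multiset.map (Function.uncurry Sym2.mk) (D''.erase (a, c)) = M₂ := by
            have h3 := hmap
            rw [hD'', Multiset.map_cons] at h3
            exact (Multiset.cons_inj_right _).mp h3
          rw [hMe]
          simp only [Multiset.map_cons, hmapE₀]
          congr 1
          exact Sym2.eq_swap
        · intro y
          have hb := hbal y
          rw [(Multiset.cons_erase hmem).symm, inD_cons, outD_cons] at hb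
          rw [inD_cons, inD_cons, outD_cons, outD_cons]
          split_ifs at hb ⊢ <;> omega
      · refine ⟨(c, x) ::ₘ (x, a) ::ₘ (D''.erase (c, a)), ?_, ?_⟩
        · have hD'' : D'' = (c, a) ::ₘ D''.erase (c, a) := (Multiset.cons_erase hmem).symm
          have hmapE₀ : Multiset.map (Function.uncurry Sym2.mk) (D''.erase (c, a)) = M₂ := by
            have h3 := hmap
            rw [hD'', Multiset.map_cons] at h3
            rw [show ((Function.uncurry Sym2.mk) (c, a)) = s(a, c) from Sym2.eq_swap] at h3
            exact (Multiset.cons_inj_right _).mp h3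
          rw [hMe]
          simp only [Multiset.map_cons, hmapE₀]
          rw [Multiset.cons_swap, show (Function.uncurry Sym2.mk (c, x) : Sym2 V) = s(x, c) from Sym2.eq_swap]; rfl
        · intro y
          have hb := hbal y
          rw [(Multiset.cons_erase hmem).symm, inD_cons, outD_cons] at hb
          rw [inD_cons, inD_cons, outD_cons, outD_cons]
          split_ifs at hb ⊢ <;> omega
    · push_neg at hA
      have hrep : ∀ z : Sym2 V, ∃ p : V × V, (Function.uncurry Sym2.mk) p = z := by
        intro z; induction z using Sym2.ind with
        | _ a b => exact ⟨(a, b), rfl⟩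
      choose rep hrepv using hrep
      refine ⟨M.map rep, ?_, ?_⟩
      · rw [Multiset.map_map]
        simp only [Function.comp, hrepv]
        exact Multiset.map_id M
      · intro x
        have hle : inD (M.map rep) x ≤ 1 := by
          calc inD (M.map rep) x
              = Multiset.card (Multiset.filter ((fun p : V × V => p.2 = x) ∘ rep) M) := by
                rw [inD, Multiset.filter_map, Multiset.card_map]
            _ ≤ Multiset.card (M.filter (fun z => x ∈ z)) := by
                apply Multiset.card_le_card
                apply Multiset.monotone_filter_right
                intro z hz
                have hzz : x ∈ (Function.uncurry Sym2.mk) (rep z) := by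
                  have h4 : (Function.uncurry Sym2.mk) (rep z) = s((rep z).1, (rep z).2) := rfl
                  rw [h4, show (rep z).2 = x from hz]
                  exact Sym2.mem_mk_right _ _
                rwa [hrepv] at hzz
            _ ≤ 1 := by have := hA x; omega
        omega

lemma two_le_card {α : Type*} [DecidableEq α] {t : Multiset α} {x y : α}
    (hx : x ∈ t) (hy : y ∈ t) (hxy : x ≠ y) : 2 ≤ Multiset.card t := by
  have h1 : y ∈ t.erase x := (Multiset.mem_erase_of_ne (Ne.symm hxy ∘ Eq.symm ∘ Eq.symm)).mpr hy
  have h2 : 0 < Multiset.card (t.erase x) := Multiset.card_pos_iff_exists_mem.mpr ⟨y, h1⟩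
  have h3 := Multiset.card_erase_of_mem hx
  rw [Nat.pred_eq_sub_one] at h3
  have h4 : 0 < Multiset.card t := Multiset.card_pos_iff_exists_mem.mpr ⟨x, hx⟩
  omega

/-- In a `c`-uniformly 2-star dense graph with `(u,v) ∉ G`, for large `n` one can choose,
for each `w ∉ {u,v}`, a subset `B w` of the wedge set of `u,w` of size `cn/3`, such that
for every pair of distinct `w₁,w₂ ∉ {u,v}`, either `w₁ ∉ B w₂` or `w₂ ∉ B w₁`. -/
theorem stmt12 (c : ℝ) (hc0 : 0 < c) (hc1 : c < 1) :
    ∃ n₀ : ℕ, ∀ n : ℕ, n₀ ≤ n → ∀ Gr : Finset (Finset (Fin n)),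
      (∀ i j : Fin n, i ≠ j → c * ((n : ℝ) - 2) ≤ ((wedge Gr i j).card : ℝ)) →
      ∀ u v : Fin n, u ≠ v → ({u, v} : Finset (Fin n)) ∉ Gr →
      ∃ B : Fin n → Finset (Fin n),
        (∀ w : Fin n, w ≠ u → w ≠ v →
          B w ⊆ wedge Gr u w ∧ (B w).card = ⌊c * (n : ℝ) / 3⌋₊) ∧
        (∀ w₁ w₂ : Fin n, w₁ ≠ u → w₁ ≠ v → w₂ ≠ u → w₂ ≠ v → w₁ ≠ w₂ →
          w₁ ∉ B w₂ ∨ w₂ ∉ B w₁) := by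
  classical
  refine ⟨⌈3 / c⌉₊ + 7, fun n hn Gr hGr u v huv hGuv => ?_⟩
  set m := ⌊c * (n : ℝ) / 3⌋₊ with hm
  set S : Fin n → Finset (Fin n) := fun w => wedge Gr u w with hS
  have hne_of_mem : ∀ a b : Fin n, a ∈ S b → a ≠ b := by
    intro a b h
    exact ((Finset.mem_filter.mp h).2).2.1
  set P : Finset (Fin n × Fin n) :=
    univ.filter (fun p => p.1 < p.2 ∧ p.2 ∈ S p.1 ∧ p.1 ∈ S p.2) with hP
  obtain ⟨D, hmap, hbal⟩ := orient (P.val.map (Function.uncurry Sym2.mk))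
  -- multiplicity bound in M
  have hcount : ∀ a b : Fin n, Multiset.count s(a, b) (P.val.map (Function.uncurry Sym2.mk)) ≤ 1 := by
    intro a b
    rw [Multiset.count_map]
    have hval : Multiset.filter (fun p => s(a, b) = (Function.uncurry Sym2.mk) p) P.val
        = (P.filter (fun p => s(a, b) = (Function.uncurry Sym2.mk) p)).val := rfl
    rw [hval]
    show (P.filter (fun p => s(a, b) = (Function.uncurry Sym2.mk) p)).card ≤ 1
    apply Finset.card_le_one.mpr
    intro p hp q hq
    have hp' := Finset.mem_filter.mp hp
    have hq' := Finset.mem_filter.mp hq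
    obtain ⟨p1, p2⟩ := p
    obtain ⟨q1, q2⟩ := q
    have hpP := (Finset.mem_filter.mp hp'.1).2.1
    have hqP := (Finset.mem_filter.mp hq'.1).2.1
    have hpe : (a = p1 ∧ b = p2) ∨ (a = p2 ∧ b = p1) := Sym2.eq_iff.mp hp'.2
    have hqe : (a = q1 ∧ b = q2) ∨ (a = q2 ∧ b = q1) := Sym2.eq_iff.mp hq'.2
    simp only [Prod.mk.injEq]
    rcases hpe with ⟨rfl, rfl⟩ | ⟨rfl, rfl⟩ <;> rcases hqe with ⟨h1, h2⟩ | ⟨h1, h2⟩ <;>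
      simp_all <;> omega
  -- key1 : elements of D are mutual pairs
  have key1 : ∀ p : Fin n × Fin n, p ∈ D → p.2 ∈ S p.1 ∧ p.1 ∈ S p.2 := by
    intro p hpD
    have h1 : (Function.uncurry Sym2.mk) p ∈ Multiset.map (Function.uncurry Sym2.mk) D := Multiset.mem_map_of_mem _ hpD
    rw [hmap] at h1
    obtain ⟨q, hqP, hq⟩ := Multiset.mem_map.mp h1
    have hqP' := (Finset.mem_filter.mp (show q ∈ P from hqP)).2
    obtain ⟨p1, p2⟩ := p
    obtain ⟨q1, q2⟩ := q
    rcases Sym2.eq_iff.mp hq with ⟨rfl, rfl⟩ | ⟨rfl, rfl⟩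
    · exact ⟨hqP'.2.1, hqP'.2.2⟩
    · exact ⟨hqP'.2.2, hqP'.2.1⟩
  -- key2 : no double orientation
  have key2 : ∀ a b : Fin n, a ≠ b → ¬((a, b) ∈ D ∧ (b, a) ∈ D) := by
    rintro a b hab ⟨h1, h2⟩
    have hcnt : 2 ≤ Multiset.count s(a, b) (Multiset.map (Function.uncurry Sym2.mk) D) := by
      rw [Multiset.count_map]
      apply two_le_card (x := (a, b)) (y := (b, a))
      · exact Multiset.mem_filter.mpr ⟨h1, rfl⟩
      · exact Multiset.mem_filter.mpr ⟨h2, Sym2.eq_swap⟩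
      · simp [Prod.ext_iff]; intro h; exact fun h' => hab (h ▸ rfl)
    rw [hmap] at hcnt
    have := hcount a b
    omega
  -- key3 : mutual pairs are oriented one way
  have key3 : ∀ a b : Fin n, a ∈ S b → b ∈ S a → (a, b) ∈ D ∨ (b, a) ∈ D := by
    intro a b hab hba
    have hne := hne_of_mem a b hab
    have hmem : s(a, b) ∈ P.val.map (Function.uncurry Sym2.mk) := by
      rcases lt_or_gt_of_ne hne with h | h
      · have : (a, b) ∈ P := Finset.mem_filter.mpr ⟨Finset.mem_univ _, h, hba, hab⟩
        exact Multiset.mem_map_of_mem _ this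
      · have : (b, a) ∈ P := Finset.mem_filter.mpr ⟨Finset.mem_univ _, h, hab, hba⟩
        have h2 := Multiset.mem_map_of_mem ((Function.uncurry Sym2.mk)) this
        rwa [show ((Function.uncurry Sym2.mk) (b, a)) = s(a, b) from Sym2.eq_swap] at h2
    rw [← hmap] at hmem
    obtain ⟨g, hgD, hg⟩ := Multiset.mem_map.mp hmem
    obtain ⟨g1, g2⟩ := g
    rcases Sym2.eq_iff.mp hg with ⟨rfl, rfl⟩ | ⟨rfl, rfl⟩
    · exact Or.inl hgD
    · exact Or.inr hgD
  -- the modified wedge sets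
  set A : Fin n → Finset (Fin n) :=
    fun w => (S w).filter (fun b => ¬(w ∈ S b ∧ (w, b) ∉ D)) with hA
  -- size bound
  have hAcard : ∀ w : Fin n, w ≠ u → m ≤ (A w).card := by
    intro w hwu
    set Bad := (S w).filter (fun b => w ∈ S b ∧ (w, b) ∉ D) with hBad
    set OutM := (S w).filter (fun b => w ∈ S b ∧ (w, b) ∈ D) with hOutM
    set Mut := (S w).filter (fun b => w ∈ S b) with hMut
    have c1 : Bad.card + (A w).card = (S w).card := by
      rw [hBad, hA]
      exact Finset.card_filter_add_card_filter_not _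
    have c2 : OutM.card + Bad.card = Mut.card := by
      rw [hOutM, hBad, hMut]
      have e1 : (S w).filter (fun b => w ∈ S b ∧ (w, b) ∈ D)
          = ((S w).filter (fun b => w ∈ S b)).filter (fun b => (w, b) ∈ D) := by
        rw [Finset.filter_filter]
      have e2 : (S w).filter (fun b => w ∈ S b ∧ (w, b) ∉ D)
          = ((S w).filter (fun b => w ∈ S b)).filter (fun b => ¬(w, b) ∈ D) := by
        rw [Finset.filter_filter]
      rw [e1, e2]
      exact Finset.card_filter_add_card_filter_not _
    have c3 : Mut.card ≤ (S w).card := Finset.card_filter_le _ _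
    -- Bad.card ≤ inD D w
    have c4 : Bad.card ≤ inD D w := by
      have hsub : Bad ⊆ (D.filter (fun p => p.2 = w)).toFinset.image Prod.fst := by
        intro b hb
        have hb' := Finset.mem_filter.mp hb
        have hbw : (b, w) ∈ D := by
          rcases key3 w b hb'.2.1 hb'.1 with h | h
          · exact absurd h hb'.2.2
          · exact h
        apply Finset.mem_image.mpr
        exact ⟨(b, w), Multiset.mem_toFinset.mpr (Multiset.mem_filter.mpr ⟨hbw, rfl⟩), rfl⟩
      calc Bad.card ≤ ((D.filter (fun p => p.2 = w)).toFinset.image Prod.fst).card :=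
            Finset.card_le_card hsub
        _ ≤ (D.filter (fun p => p.2 = w)).toFinset.card := Finset.card_image_le
        _ ≤ inD D w := Multiset.toFinset_card_le _
    -- outD D w ≤ OutM.card
    have c5 : outD D w ≤ OutM.card := by
      set F := D.filter (fun p => p.1 = w) with hF
      have hnodup : F.Nodup := by
        apply Multiset.nodup_iff_count_le_one.mpr
        intro p
        have h1 : Multiset.count p F ≤ Multiset.count p D := by
          rw [hF]; exact Multiset.count_le_of_le _ (Multiset.filter_le _ _)
        have h2 : Multiset.count p D ≤ Multiset.count ((Function.uncurry Sym2.mk) p) (Multiset.map (Function.uncurry Sym2.mk) D) := by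
          rw [Multiset.count_map, Multiset.count_eq_card_filter_eq]
          apply Multiset.card_le_card
          apply Multiset.monotone_filter_right
          intro q hq
          rw [hq]
        obtain ⟨p1, p2⟩ := p
        have h3 : Multiset.count ((Function.uncurry Sym2.mk) (p1, p2)) _ ≤ 1 := hcount p1 p2
        rw [hmap] at h2
        omega
      have himg : F.toFinset.image Prod.snd ⊆ OutM := by
        intro b hb
        obtain ⟨p, hp, hpb⟩ := Finset.mem_image.mp hb
        have hp' := Multiset.mem_filter.mp (Multiset.mem_toFinset.mp hp)
        have hkey := key1 p hp'.1
        have hpw : p = (w, b) := by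
          obtain ⟨p1, p2⟩ := p
          simp only [Prod.mk.injEq]
          exact ⟨hp'.2, hpb⟩
        rw [hpw] at hp' hkey
        exact Finset.mem_filter.mpr ⟨hkey.1, hkey.2, hp'.1⟩
      have hinj : Set.InjOn Prod.snd (F.toFinset : Set (Fin n × Fin n)) := by
        intro p hp q hq hpq
        have hp' := Multiset.mem_filter.mp (Multiset.mem_toFinset.mp hp)
        have hq' := Multiset.mem_filter.mp (Multiset.mem_toFinset.mp hq)
        obtain ⟨p1, p2⟩ := p
        obtain ⟨q1, q2⟩ := q
        simp only [Prod.mk.injEq]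
        exact ⟨hp'.2.trans hq'.2.symm, hpq⟩
      calc outD D w = Multiset.card F := rfl
        _ = F.toFinset.card := (Multiset.toFinset_card_of_nodup hnodup).symm
        _ = (F.toFinset.image Prod.snd).card := (Finset.card_image_of_injOn hinj).symm
        _ ≤ OutM.card := Finset.card_le_card himg
    -- the real inequality
    have hSw : 2 * m + 1 ≤ (S w).card := by
      have hreal : ((2 * m + 1 : ℕ) : ℝ) ≤ c * ((n : ℝ) - 2) := by
        have h1 : (m : ℝ) ≤ c * (n : ℝ) / 3 :=
          Nat.floor_le (by positivity)
        have h2 : (3 / c : ℝ) + 7 ≤ (n : ℝ) := by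
          have := Nat.le_ceil (3 / c)
          have hcast : ((⌈3 / c⌉₊ + 7 : ℕ) : ℝ) ≤ (n : ℝ) := by exact_mod_cast hn
          push_cast at hcast
          linarith
        have h3 : 3 + 7 * c ≤ c * (n : ℝ) := by
          have := mul_le_mul_of_nonneg_left h2 (le_of_lt hc0)
          have hcc : c * (3 / c) = 3 := by field_simp
          nlinarith
        push_cast
        nlinarith
      have h4 := hGr u w (Ne.symm hwu)
      have : ((2 * m + 1 : ℕ) : ℝ) ≤ ((S w).card : ℝ) := le_trans hreal h4
      exact_mod_cast this
    have hchain := hbal w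
    omega
  -- choose B
  have hBex : ∀ w : Fin n, ∃ t : Finset (Fin n), w ≠ u → t ⊆ A w ∧ t.card = m := by
    intro w
    by_cases hw : w = u
    · exact ⟨∅, fun h => absurd hw h⟩
    · obtain ⟨t, ht, htc⟩ := Finset.exists_subset_card_eq (hAcard w hw)
      exact ⟨t, fun _ => ⟨ht, htc⟩⟩
  choose B hB using hBex
  refine ⟨B, ?_, ?_⟩
  · intro w hwu hwv
    obtain ⟨hsub, hcard⟩ := hB w hwu
    exact ⟨hsub.trans (Finset.filter_subset _ _), hcard⟩
  · intro w₁ w₂ h1u h1v h2u h2v hne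
    by_contra hcon
    push_neg at hcon
    obtain ⟨hm1, hm2⟩ := hcon
    have ha1 := Finset.mem_filter.mp ((hB w₁ h1u).1 hm2)
    have ha2 := Finset.mem_filter.mp ((hB w₂ h2u).1 hm1)
    push_neg at ha1 ha2
    have hd1 : (w₁, w₂) ∈ D := ha1.2 ha2.1
    have hd2 : (w₂, w₁) ∈ D := ha2.2 ha1.1
    exact key2 w₁ w₂ hne ⟨hd1, hd2⟩
end

section
/- Let P be a q-marginally small distribution on {0,1}^N whose graphical model has maximum degree Δ. Then the Glauber dynamics on P satisfies path coupling with contraction constant α = (1−6qΔ)/N with respect to the uniform Hamming distance: for any two configurations x, x' differing in exactly one coordinate, there is a one-step coupling with E[d_H(step(x), step(x'))] ≤ (1 − (1−6qΔ)/N) · d_H(x,x'). -/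
open Finset

/-- The Glauber dynamics transition kernel of `μ` on `{0,1}^N`. -/
noncomputable def glauber {N : ℕ} (μ : (Fin N → Bool) → ℝ) (σ τ : Fin N → Bool) : ℝ :=
  (1 / (N : ℝ)) * ∑ i : Fin N,
    (if ∀ j : Fin N, j ≠ i → τ j = σ j then
      μ (Function.update σ i (τ i)) /
        (μ (Function.update σ i true) + μ (Function.update σ i false))
    else 0)

/-- Hamming distance between two configurations. -/
def hamming {N : ℕ} (x y : Fin N → Bool) : ℕ :=
  (Finset.univ.filter (fun i => x i ≠ y i)).card

noncomputable def condp {N : ℕ} (μ : (Fin N → Bool) → ℝ) (i : Fin N) (σ : Fin N → Bool)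
    (b : Bool) : ℝ :=
  μ (Function.update σ i b) / (μ (Function.update σ i true) + μ (Function.update σ i false))

lemma filter_agree {N : ℕ} (σ : Fin N → Bool) (i : Fin N) :
    Finset.univ.filter (fun y : Fin N → Bool => ∀ j, j ≠ i → y j = σ j) =
      {Function.update σ i true, Function.update σ i false} := by
  ext y
  simp only [mem_filter, mem_univ, true_and, mem_insert, mem_singleton]
  constructor
  · intro h
    have hy : y = Function.update σ i (y i) := by
      funext j
      by_cases hj : j = i
      · subst hj; simp
      · rw [Function.update_of_ne hj]; exact h j hj
    cases hb : y i
    · right; rw [hy, hb]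
    · left; rw [hy, hb]
  · rintro (rfl | rfl) j hj <;> simp [Function.update_of_ne hj]

lemma update_tf_ne {N : ℕ} (σ : Fin N → Bool) (i : Fin N) :
    Function.update σ i true ≠ Function.update σ i false := by
  intro h
  have := congrFun h i
  simp at this

lemma sum_agree {N : ℕ} (σ : Fin N → Bool) (i : Fin N) (f : (Fin N → Bool) → ℝ) :
    (∑ y : Fin N → Bool, if ∀ j, j ≠ i → y j = σ j then f y else 0) =
      f (Function.update σ i true) + f (Function.update σ i false) := by
  rw [← Finset.sum_filter, filter_agree, Finset.sum_pair (update_tf_ne σ i)]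

section condp
variable {N : ℕ} {μ : (Fin N → Bool) → ℝ}

lemma Zpos (hμ0 : ∀ σ, 0 < μ σ) (i : Fin N) (σ : Fin N → Bool) :
    0 < μ (Function.update σ i true) + μ (Function.update σ i false) :=
  add_pos (hμ0 _) (hμ0 _)

lemma condp_nonneg (hμ0 : ∀ σ, 0 < μ σ) (i : Fin N) (σ : Fin N → Bool) (b : Bool) : 0 ≤ condp μ i σ b :=
  div_nonneg (hμ0 _).le (Zpos hμ0 i σ).le

lemma condp_add (hμ0 : ∀ σ, 0 < μ σ) (i : Fin N) (σ : Fin N → Bool) :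
    condp μ i σ true + condp μ i σ false = 1 := by
  rw [condp, condp, ← add_div, div_self (Zpos hμ0 i σ).ne']

lemma condp_le (hμ0 : ∀ σ, 0 < μ σ) (i : Fin N) (σ : Fin N → Bool) {q : ℝ}
    (hsmall : μ (Function.update σ i true) ≤
      q * (μ (Function.update σ i true) + μ (Function.update σ i false))) :
    condp μ i σ true ≤ q := by
  rw [condp, div_le_iff₀ (Zpos hμ0 i σ)]
  linarith

end condp

lemma condp_congr {N : ℕ} {μ : (Fin N → Bool) → ℝ} (hμ0 : ∀ σ, 0 < μ σ)
    (i : Fin N) (σ τ : Fin N → Bool)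
    (h : μ (Function.update σ i true) *
          (μ (Function.update τ i true) + μ (Function.update τ i false)) =
        μ (Function.update τ i true) *
          (μ (Function.update σ i true) + μ (Function.update σ i false)))
    (b : Bool) : condp μ i σ b = condp μ i τ b := by
  have ht : condp μ i σ true = condp μ i τ true := by
    rw [condp, condp, div_eq_div_iff (Zpos hμ0 i σ).ne' (Zpos hμ0 i τ).ne']
    exact h
  cases b
  · have h1 := condp_add hμ0 i σ
    have h2 := condp_add hμ0 i τ
    linarith
  · exact ht

section ham
variable {N : ℕ} {x x' : Fin N → Bool} {i₀ : Fin N}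

lemma ham_one (hi : x i₀ ≠ x' i₀) (hag : ∀ j, j ≠ i₀ → x j = x' j) : hamming x x' = 1 := by
  rw [hamming]
  convert Finset.card_singleton i₀
  ext j
  simp only [mem_filter, mem_univ, true_and, mem_singleton]
  constructor
  · intro h
    by_contra hj
    exact h (hag j hj)
  · rintro rfl; exact hi

lemma ham_upd_same (hi : x i₀ ≠ x' i₀) (hag : ∀ j, j ≠ i₀ → x j = x' j) (i : Fin N) (b : Bool) :
    hamming (Function.update x i b) (Function.update x' i b) =
      if i = i₀ then 0 else 1 := by
  rw [hamming]
  split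
  · next h =>
    subst h
    rw [Finset.card_eq_zero]
    ext j
    simp only [mem_filter, mem_univ, true_and, Finset.notMem_empty, iff_false,
      not_not, Decidable.not_not]
    by_cases hj : j = i
    · subst hj; simp
    · rw [Function.update_of_ne hj, Function.update_of_ne hj]
      exact hag j hj
  · next h =>
    convert Finset.card_singleton i₀
    ext j
    simp only [mem_filter, mem_univ, true_and, mem_singleton]
    by_cases hj : j = i
    · subst hj; simpa using h
    · rw [Function.update_of_ne hj, Function.update_of_ne hj]
      constructor
      · intro hh; by_contra hj0; exact hh (hag j hj0)
      · rintro rfl; exact hi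

lemma ham_upd_le2 (hag : ∀ j, j ≠ i₀ → x j = x' j) (i : Fin N) (b b' : Bool) :
    hamming (Function.update x i b) (Function.update x' i b') ≤ 2 := by
  rw [hamming]
  calc (Finset.univ.filter
      (fun j => Function.update x i b j ≠ Function.update x' i b' j)).card
      ≤ ({i, i₀} : Finset (Fin N)).card := by
        apply Finset.card_le_card
        intro j hj
        simp only [mem_filter, mem_univ, true_and] at hj
        simp only [mem_insert, mem_singleton]
        by_contra hc
        push_neg at hc
        rw [Function.update_of_ne hc.1, Function.update_of_ne hc.1] at hj
        exact hj (hag j hc.2)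
    _ ≤ 2 := Finset.card_insert_le _ _ |>.trans (by simp)

lemma ham_upd_eqb (hi : x i₀ ≠ x' i₀) (hag : ∀ j, j ≠ i₀ → x j = x' j) (i : Fin N) (hne : i ≠ i₀) (b : Bool) :
    hamming (Function.update x i b) (Function.update x' i b) = 1 := by
  rw [ham_upd_same hi hag, if_neg hne]

end ham

noncomputable def cpl {N : ℕ} (μ : (Fin N → Bool) → ℝ) (Adj : Fin N → Fin N → Bool)
    (i₀ : Fin N) (x x' : Fin N → Bool) (i : Fin N) (y y' : Fin N → Bool) : ℝ :=
  if Adj i₀ i = true then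
    (if ∀ j, j ≠ i → y j = x j then condp μ i x (y i) else 0) *
    (if ∀ j, j ≠ i → y' j = x' j then condp μ i x' (y' i) else 0)
  else
    if (∀ j, j ≠ i → y j = x j) ∧ y' = Function.update x' i (y i) then
      condp μ i x (y i) else 0

lemma cpl_nonneg {N : ℕ} {μ : (Fin N → Bool) → ℝ} (hμ0 : ∀ σ, 0 < μ σ)
    (Adj : Fin N → Fin N → Bool) (i₀ : Fin N) (x x' : Fin N → Bool)
    (i : Fin N) (y y' : Fin N → Bool) : 0 ≤ cpl μ Adj i₀ x x' i y y' := by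
  rw [cpl]
  split
  · apply mul_nonneg
    · split
      · exact condp_nonneg hμ0 _ _ _
      · exact le_refl 0
    · split
      · exact condp_nonneg hμ0 _ _ _
      · exact le_refl 0
  · split
    · exact condp_nonneg hμ0 _ _ _
    · exact le_refl 0

lemma cpl_margin1 {N : ℕ} {μ : (Fin N → Bool) → ℝ} (hμ0 : ∀ σ, 0 < μ σ)
    (Adj : Fin N → Fin N → Bool) (i₀ : Fin N) (x x' : Fin N → Bool)
    (i : Fin N) (y : Fin N → Bool) :
    (∑ y' : Fin N → Bool, cpl μ Adj i₀ x x' i y y') =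
      if ∀ j, j ≠ i → y j = x j then condp μ i x (y i) else 0 := by
  simp only [cpl]
  by_cases hA : Adj i₀ i = true
  · simp only [if_pos hA, ← Finset.mul_sum]
    rw [sum_agree x' i (fun y' => condp μ i x' (y' i))]
    simp only [Function.update_self]
    rw [condp_add hμ0]
    rw [mul_one]
  · simp only [if_neg hA]
    by_cases hP : ∀ j, j ≠ i → y j = x j
    · simp only [eq_true hP, true_and]
      rw [Finset.sum_ite_eq' Finset.univ (Function.update x' i (y i))
        (fun _ => condp μ i x (y i))]
      simp [hP]
    · simp [hP]

lemma cpl_margin2 {N : ℕ} {μ : (Fin N → Bool) → ℝ} (hμ0 : ∀ σ, 0 < μ σ)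
    (Adj : Fin N → Fin N → Bool) (i₀ : Fin N) (x x' : Fin N → Bool)
    (i : Fin N)
    (hpp : Adj i₀ i = false → ∀ b, condp μ i x b = condp μ i x' b)
    (y' : Fin N → Bool) :
    (∑ y : Fin N → Bool, cpl μ Adj i₀ x x' i y y') =
      if ∀ j, j ≠ i → y' j = x' j then condp μ i x' (y' i) else 0 := by
  simp only [cpl]
  by_cases hA : Adj i₀ i = true
  · simp only [if_pos hA, ← Finset.sum_mul]
    rw [sum_agree x i (fun y => condp μ i x (y i))]
    simp only [Function.update_self]
    rw [condp_add hμ0, one_mul]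
  · simp only [if_neg hA]
    have hpp' := hpp (by simpa using hA)
    have key : ∀ y : Fin N → Bool,
        (if (∀ j, j ≠ i → y j = x j) ∧ y' = Function.update x' i (y i) then
          condp μ i x (y i) else 0) =
        (if ∀ j, j ≠ i → y j = x j then
          (if y' = Function.update x' i (y i) then condp μ i x (y i) else 0) else 0) := by
      intro y
      by_cases h1 : ∀ j, j ≠ i → y j = x j
      · simp only [eq_true h1, true_and, if_true]
      · simp only [eq_false h1, false_and, if_false]
    rw [Finset.sum_congr rfl (fun y _ => key y)]
    rw [sum_agree x i (fun y =>
      if y' = Function.update x' i (y i) then condp μ i x (y i) else 0)]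
    simp only [Function.update_self]
    by_cases hP : ∀ j, j ≠ i → y' j = x' j
    · rw [if_pos hP]
      have hy' : y' = Function.update x' i (y' i) := by
        funext j
        by_cases hj : j = i
        · subst hj; simp
        · rw [Function.update_of_ne hj]; exact hP j hj
      cases hb : y' i
      · have h1 : y' ≠ Function.update x' i true := by
          rw [hy', hb]; exact (update_tf_ne x' i).symm
        have h2 : y' = Function.update x' i false := by rw [hy', hb]
        rw [if_neg h1, if_pos h2, hpp' false, zero_add]
      · have h1 : y' = Function.update x' i true := by rw [hy', hb]
        have h2 : y' ≠ Function.update x' i false := by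
          rw [hy', hb]; exact update_tf_ne x' i
        rw [if_pos h1, if_neg h2, hpp' true, add_zero]
    · rw [if_neg hP, if_neg, if_neg, add_zero]
      · intro h
        apply hP
        intro j hj
        rw [h, Function.update_of_ne hj]
      · intro h
        apply hP
        intro j hj
        rw [h, Function.update_of_ne hj]

lemma cpl_ham {N : ℕ} {μ : (Fin N → Bool) → ℝ} (hμ0 : ∀ σ, 0 < μ σ)
    (Adj : Fin N → Fin N → Bool) {i₀ : Fin N} {x x' : Fin N → Bool}
    (hi : x i₀ ≠ x' i₀) (hag : ∀ j, j ≠ i₀ → x j = x' j)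
    {q : ℝ} (hq0 : 0 ≤ q) (i : Fin N)
    (hqx : condp μ i x true ≤ q) (hqx' : condp μ i x' true ≤ q)
    (hii : Adj i₀ i = true → i ≠ i₀) :
    (∑ y : Fin N → Bool, ∑ y' : Fin N → Bool,
        cpl μ Adj i₀ x x' i y y' * (hamming y y' : ℝ)) ≤
      (if i = i₀ then 0 else 1) + (if Adj i₀ i = true then 2 * q else 0) := by
  have hadd := condp_add hμ0 i x
  have hadd' := condp_add hμ0 i x'
  have hn1 := condp_nonneg hμ0 i x true
  have hn2 := condp_nonneg hμ0 i x false
  have hn3 := condp_nonneg hμ0 i x' true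
  have hn4 := condp_nonneg hμ0 i x' false
  simp only [cpl]
  by_cases hA : Adj i₀ i = true
  · -- adjacent case
    have hne := hii hA
    simp only [if_pos hA]
    have key : ∀ y y' : Fin N → Bool,
        ((if ∀ j, j ≠ i → y j = x j then condp μ i x (y i) else 0) *
          (if ∀ j, j ≠ i → y' j = x' j then condp μ i x' (y' i) else 0)) *
          (hamming y y' : ℝ) =
        (if ∀ j, j ≠ i → y j = x j then
          (if ∀ j, j ≠ i → y' j = x' j then
            condp μ i x (y i) * condp μ i x' (y' i) * (hamming y y' : ℝ) else 0)
          else 0) := by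
      intro y y'
      by_cases h1 : ∀ j, j ≠ i → y j = x j
      · by_cases h2 : ∀ j, j ≠ i → y' j = x' j
        · simp only [eq_true h1, eq_true h2, if_true]
        · simp only [eq_true h1, eq_false h2, if_true, if_false, mul_zero, zero_mul]
      · simp only [eq_false h1, if_false, zero_mul]
    calc (∑ y : Fin N → Bool, ∑ y' : Fin N → Bool,
        ((if ∀ j, j ≠ i → y j = x j then condp μ i x (y i) else 0) *
          (if ∀ j, j ≠ i → y' j = x' j then condp μ i x' (y' i) else 0)) *
          (hamming y y' : ℝ))
        = ∑ y : Fin N → Bool, (if ∀ j, j ≠ i → y j = x j then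
            (∑ y' : Fin N → Bool, if ∀ j, j ≠ i → y' j = x' j then
              condp μ i x (y i) * condp μ i x' (y' i) * (hamming y y' : ℝ) else 0)
            else 0) := by
          apply Finset.sum_congr rfl
          intro y _
          rw [Finset.sum_congr rfl (fun y' _ => key y y')]
          by_cases h1 : ∀ j, j ≠ i → y j = x j
          · simp only [eq_true h1, if_true]
          · simp only [eq_false h1, if_false, Finset.sum_const_zero]
      _ = ∑ b : Bool, ∑ b' : Bool,
            condp μ i x b * condp μ i x' b' *
              (hamming (Function.update x i b) (Function.update x' i b') : ℝ) := by
          rw [sum_agree x i]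
          rw [sum_agree x' i, sum_agree x' i]
          simp only [Function.update_self]
          rw [Fintype.sum_bool, Fintype.sum_bool, Fintype.sum_bool]
      _ ≤ (if i = i₀ then 0 else 1) + 2 * q := by
          rw [if_neg hne]
          rw [Fintype.sum_bool]
          rw [Fintype.sum_bool, Fintype.sum_bool]
          have e1 : (hamming (Function.update x i true) (Function.update x' i true) : ℝ)
              = 1 := by rw [ham_upd_eqb hi hag i hne true]; norm_num
          have e2 : (hamming (Function.update x i false) (Function.update x' i false) : ℝ)
              = 1 := by rw [ham_upd_eqb hi hag i hne false]; norm_num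
          have e3 : (hamming (Function.update x i true) (Function.update x' i false) : ℝ)
              ≤ 2 := by exact_mod_cast ham_upd_le2 hag i true false
          have e4 : (hamming (Function.update x i false) (Function.update x' i true) : ℝ)
              ≤ 2 := by exact_mod_cast ham_upd_le2 hag i false true
          have hham3 : (0:ℝ) ≤ (hamming (Function.update x i true) (Function.update x' i false) : ℝ) := by positivity
          nlinarith [mul_nonneg hn1 hn4, mul_nonneg hn2 hn3, mul_nonneg hn1 hn3,
            mul_nonneg hn2 hn4]
  · -- non-adjacent case
    simp only [if_neg hA]
    have key : ∀ y : Fin N → Bool,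
        (∑ y' : Fin N → Bool,
          (if (∀ j, j ≠ i → y j = x j) ∧ y' = Function.update x' i (y i) then
            condp μ i x (y i) else 0) * (hamming y y' : ℝ)) =
        (if ∀ j, j ≠ i → y j = x j then
          condp μ i x (y i) *
            (hamming y (Function.update x' i (y i)) : ℝ) else 0) := by
      intro y
      by_cases h1 : ∀ j, j ≠ i → y j = x j
      · simp only [eq_true h1, true_and, if_true, ite_mul, zero_mul]
        rw [Finset.sum_ite_eq' Finset.univ (Function.update x' i (y i))
          (fun y' => condp μ i x (y i) * (hamming y y' : ℝ))]
        simp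
      · simp only [eq_false h1, false_and, if_false, zero_mul, Finset.sum_const_zero]
    rw [Finset.sum_congr rfl (fun y _ => key y)]
    rw [sum_agree x i (fun y => condp μ i x (y i) *
      (hamming y (Function.update x' i (y i)) : ℝ))]
    simp only [Function.update_self]
    have e1 := ham_upd_same hi hag i true (x := x) (x' := x')
    have e2 := ham_upd_same hi hag i false (x := x) (x' := x')
    by_cases hio : i = i₀
    · rw [if_pos hio] at e1 e2 ⊢
      rw [e1, e2]
      simp [hA]
    · rw [if_neg hio] at e1 e2 ⊢
      rw [e1, e2]
      simp only [if_neg hA, add_zero, Nat.cast_one, mul_one]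
      linarith


lemma glauber_eq' {N : ℕ} (μ : (Fin N → Bool) → ℝ) (σ τ : Fin N → Bool) :
    glauber μ σ τ = (1 / (N : ℝ)) * ∑ i : Fin N,
      (if ∀ j : Fin N, j ≠ i → τ j = σ j then condp μ i σ (τ i) else 0) := rfl

/-- Path coupling for marginally small distributions: if `μ` is `q`-marginally small with
graphical model of maximum degree `Δ`, then for configurations differing in exactly one
coordinate there is a one-step coupling of the Glauber dynamics contracting the Hamming
distance by a factor `1 − (1−6qΔ)/N`. -/
theorem stmt16 {N : ℕ} (hN : 0 < N) (μ : (Fin N → Bool) → ℝ)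
    (hμ0 : ∀ σ, 0 < μ σ) (hμ1 : ∑ σ, μ σ = 1)
    (Adj : Fin N → Fin N → Bool)
    (hsym : ∀ i j, Adj i j = Adj j i) (hirr : ∀ i, Adj i i = false)
    (Δ : ℕ) (hdeg : ∀ i, (Finset.univ.filter (fun j => Adj i j = true)).card ≤ Δ)
    (q : ℝ) (hq0 : 0 ≤ q)
    (hsmall : ∀ (i : Fin N) (σ : Fin N → Bool),
      μ (Function.update σ i true) ≤
        q * (μ (Function.update σ i true) + μ (Function.update σ i false)))
    (hMarkov : ∀ (i : Fin N) (σ τ : Fin N → Bool),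
      (∀ j, Adj i j = true → σ j = τ j) →
      μ (Function.update σ i true) *
          (μ (Function.update τ i true) + μ (Function.update τ i false)) =
        μ (Function.update τ i true) *
          (μ (Function.update σ i true) + μ (Function.update σ i false)))
    (x x' : Fin N → Bool) (hdiff : ∃ i, x i ≠ x' i ∧ ∀ j, j ≠ i → x j = x' j) :
    ∃ ν : ((Fin N → Bool) × (Fin N → Bool)) → ℝ,
      (∀ z, 0 ≤ ν z) ∧
      (∀ y, ∑ y', ν (y, y') = glauber μ x y) ∧
      (∀ y', ∑ y, ν (y, y') = glauber μ x' y') ∧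
      (∑ z : (Fin N → Bool) × (Fin N → Bool), ν z * (hamming z.1 z.2 : ℝ)) ≤
        (1 - (1 - 6 * q * (Δ : ℝ)) / (N : ℝ)) * (hamming x x' : ℝ) := by

  obtain ⟨i₀, hi, hag⟩ := hdiff
  have hNpos : (0:ℝ) < N := by exact_mod_cast hN
  have hpp : ∀ i : Fin N, Adj i₀ i = false → ∀ b, condp μ i x b = condp μ i x' b := by
    intro i hA b
    apply condp_congr hμ0 i x x' _ b
    apply hMarkov
    intro j hj
    apply hag
    intro hji0
    subst hji0
    rw [hsym i j, hA] at hj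
    simp at hj
  refine ⟨fun z => (1 / (N:ℝ)) * ∑ i, cpl μ Adj i₀ x x' i z.1 z.2, ?_, ?_, ?_, ?_⟩
  · intro z
    apply mul_nonneg (by positivity)
    exact Finset.sum_nonneg fun i _ => cpl_nonneg hμ0 Adj i₀ x x' i z.1 z.2
  · intro y
    simp only
    rw [← Finset.mul_sum, Finset.sum_comm, glauber_eq']
    congr 1
    exact Finset.sum_congr rfl fun i _ => cpl_margin1 hμ0 Adj i₀ x x' i y
  · intro y'
    simp only
    rw [← Finset.mul_sum, Finset.sum_comm, glauber_eq']
    congr 1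
    exact Finset.sum_congr rfl fun i _ => cpl_margin2 hμ0 Adj i₀ x x' i (hpp i) y'
  · rw [Fintype.sum_prod_type]
    simp only
    have e : ∀ y y' : Fin N → Bool,
        ((1 / (N:ℝ)) * ∑ i, cpl μ Adj i₀ x x' i y y') * (hamming y y' : ℝ) =
        (1 / (N:ℝ)) * ∑ i, cpl μ Adj i₀ x x' i y y' * (hamming y y' : ℝ) := by
      intro y y'
      rw [mul_assoc, Finset.sum_mul]
    calc (∑ y : Fin N → Bool, ∑ y' : Fin N → Bool,
        ((1 / (N:ℝ)) * ∑ i, cpl μ Adj i₀ x x' i y y') * (hamming y y' : ℝ))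
        = (1 / (N:ℝ)) * ∑ i : Fin N, ∑ y : Fin N → Bool, ∑ y' : Fin N → Bool,
            cpl μ Adj i₀ x x' i y y' * (hamming y y' : ℝ) := by
          rw [Finset.sum_congr rfl (fun y _ => Finset.sum_congr rfl (fun y' _ => e y y'))]
          simp only [← Finset.mul_sum]
          congr 1
          rw [Finset.sum_congr rfl (fun y (_ : y ∈ Finset.univ) => Finset.sum_comm),
            Finset.sum_comm]
      _ ≤ (1 / (N:ℝ)) * (((N:ℝ) - 1) + (Δ:ℝ) * (2*q)) := by
          apply mul_le_mul_of_nonneg_left _ (by positivity)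
          calc (∑ i : Fin N, ∑ y : Fin N → Bool, ∑ y' : Fin N → Bool,
              cpl μ Adj i₀ x x' i y y' * (hamming y y' : ℝ))
              ≤ ∑ i : Fin N, ((if i = i₀ then (0:ℝ) else 1) +
                  (if Adj i₀ i = true then 2*q else 0)) := by
                apply Finset.sum_le_sum
                intro i _
                apply cpl_ham hμ0 Adj hi hag hq0 i
                  (condp_le hμ0 i x (hsmall i x)) (condp_le hμ0 i x' (hsmall i x'))
                intro hA h
                rw [h, hirr] at hA
                simp at hA
            _ = (∑ i : Fin N, if i = i₀ then (0:ℝ) else 1) +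
                (∑ i : Fin N, if Adj i₀ i = true then 2*q else 0) :=
                Finset.sum_add_distrib
            _ ≤ ((N:ℝ) - 1) + (Δ:ℝ) * (2*q) := by
                have hA1 : (∑ i : Fin N, if i = i₀ then (0:ℝ) else 1) = (N:ℝ) - 1 := by
                  have hrw : ∀ i : Fin N, (if i = i₀ then (0:ℝ) else 1) =
                      1 - (if i = i₀ then (1:ℝ) else 0) := by
                    intro i; split <;> norm_num
                  rw [Finset.sum_congr rfl fun i _ => hrw i, Finset.sum_sub_distrib,
                    Finset.sum_const, Finset.card_univ, Fintype.card_fin,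
                    Finset.sum_ite_eq' Finset.univ i₀ fun _ => (1:ℝ),
                    if_pos (Finset.mem_univ i₀), nsmul_eq_mul, mul_one]
                have hB : (∑ i : Fin N, if Adj i₀ i = true then 2*q else 0)
                    ≤ (Δ:ℝ) * (2*q) := by
                  rw [← Finset.sum_filter, Finset.sum_const, nsmul_eq_mul]
                  apply mul_le_mul_of_nonneg_right _ (by positivity)
                  exact_mod_cast hdeg i₀
                linarith
      _ ≤ (1 - (1 - 6 * q * (Δ : ℝ)) / (N : ℝ)) * (hamming x x' : ℝ) := by
          rw [ham_one hi hag, Nat.cast_one, mul_one]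
          have hkey : 1 - (1 - 6*q*(Δ:ℝ))/(N:ℝ) -
              (1 / (N:ℝ)) * (((N:ℝ) - 1) + (Δ:ℝ) * (2*q)) = (4*q*(Δ:ℝ))/(N:ℝ) := by
            field_simp
            ring
          have hpos : (0:ℝ) ≤ (4*q*(Δ:ℝ))/(N:ℝ) := by positivity
          linarith
end
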